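/- Let v be a submultiplicative weight on ℝ^d. Then v satisfies the GRS-condition (lim_{ℓ→∞} v(ℓx)^{1/ℓ} = 1 for all x) if and only if for every ε > 0 there exists C > 0 such that v(x) ≤ C·exp(ε|x|) for all x ∈ ℝ^d. -/

import Mathlib

open Filter Real

section GRSaux
variable {d : ℕ} {v : EuclideanSpace ℝ (Fin d) → ℝ}

lemma grs_one_le (hpos : ∀ x, 0 < v x) (heven : ∀ x, v (-x) = v x)
    (hsub : ∀ x y, v (x + y) ≤ v x * v y) : ∀ x, 1 ≤ v x := by
  have h0 : 1 ≤ v 0 := by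
    have h := hsub 0 0
    simp only [add_zero] at h
    nlinarith [hpos 0]
  intro x
  have h2 : v 0 ≤ v x * v x := by
    have h := hsub x (-x)
    rw [heven] at h
    simpa using h
  nlinarith [hpos x]

lemma grs_pow (hpos : ∀ x, 0 < v x) (hsub : ∀ x y, v (x + y) ≤ v x * v y) :
    ∀ n : ℕ, 1 ≤ n → ∀ x, v ((n : ℝ) • x) ≤ v x ^ n := by
  intro n hn
  induction n, hn using Nat.le_induction with
  | base => intro x; simp
  | succ n hn ih =>
    intro x
    have h : ((n + 1 : ℕ) : ℝ) • x = (n : ℝ) • x + x := by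
      push_cast; rw [add_smul, one_smul]
    rw [h, pow_succ]
    exact le_trans (hsub _ _) (mul_le_mul_of_nonneg_right (ih x) (hpos x).le)

lemma grs_growth (hpos : ∀ x, 0 < v x) (heven : ∀ x, v (-x) = v x)
    (hsub : ∀ x y, v (x + y) ≤ v x * v y)
    (hloc : ∀ R : ℝ, ∃ M : ℝ, ∀ x, ‖x‖ ≤ R → v x ≤ M) :
    ∃ K : ℝ, 1 ≤ K ∧ ∀ x, Real.log (v x) ≤ K * (‖x‖ + 1) := by
  obtain ⟨M, hM⟩ := hloc 1
  have hM1 : 1 ≤ M := le_trans (grs_one_le hpos heven hsub 0) (hM 0 (by simp))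
  refine ⟨max (Real.log M) 1, le_max_right _ _, fun x => ?_⟩
  set n : ℕ := max ⌈‖x‖⌉₊ 1 with hn
  have hn1 : 1 ≤ n := le_max_right _ _
  have hnpos : (0:ℝ) < (n:ℝ) := by exact_mod_cast Nat.lt_of_lt_of_le Nat.zero_lt_one hn1
  have hxn : ‖x‖ ≤ (n:ℝ) := le_trans (Nat.le_ceil _) (by exact_mod_cast le_max_left _ _)
  set y := ((n:ℝ))⁻¹ • x with hy
  have hyx : (n : ℝ) • y = x := smul_inv_smul₀ (ne_of_gt hnpos) x
  have hynorm : ‖y‖ ≤ 1 := by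
    rw [hy, norm_smul, norm_inv, Real.norm_eq_abs, abs_of_pos hnpos]
    rw [inv_mul_le_iff₀ hnpos, mul_one]; exact hxn
  have h1 : v x ≤ M ^ n := by
    calc v x = v ((n:ℝ) • y) := by rw [hyx]
    _ ≤ v y ^ n := grs_pow hpos hsub n hn1 y
    _ ≤ M ^ n := pow_le_pow_left₀ (le_of_lt (hpos y)) (hM y hynorm) n
  have h2 : Real.log (v x) ≤ (n : ℝ) * Real.log M := by
    calc Real.log (v x) ≤ Real.log (M ^ n) := Real.log_le_log (hpos x) h1
    _ = (n : ℝ) * Real.log M := by rw [Real.log_pow]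
  have hnle : (n : ℝ) ≤ ‖x‖ + 1 := by
    rw [hn, Nat.cast_max]
    apply max_le (le_of_lt (Nat.ceil_lt_add_one (norm_nonneg x)))
    have := norm_nonneg x; push_cast; linarith
  have hlM : 0 ≤ Real.log M := Real.log_nonneg hM1
  have hmax : Real.log M ≤ max (Real.log M) 1 := le_max_left _ _
  have hmax0 : (0:ℝ) ≤ max (Real.log M) 1 := le_trans hlM hmax
  nlinarith [norm_nonneg x]

end GRSaux


theorem stmt4 (d : ℕ) (v : EuclideanSpace ℝ (Fin d) → ℝ)
    (hpos : ∀ x, 0 < v x)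
    (heven : ∀ x, v (-x) = v x)
    (hsub : ∀ x y, v (x + y) ≤ v x * v y)
    (hloc : ∀ R : ℝ, ∃ M : ℝ, ∀ x, ‖x‖ ≤ R → v x ≤ M) :
    (∀ x, Filter.Tendsto (fun ℓ : ℕ => (v ((ℓ : ℝ) • x)) ^ ((ℓ : ℝ)⁻¹)) atTop (nhds 1)) ↔
    (∀ ε : ℝ, 0 < ε → ∃ C : ℝ, 0 < C ∧ ∀ x, v x ≤ C * Real.exp (ε * ‖x‖)) := by
  have hone : ∀ x, 1 ≤ v x := grs_one_le hpos heven hsub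
  constructor
  · intro hGRS
    obtain ⟨K, hK1, hKb⟩ := grs_growth hpos heven hsub hloc
    intro ε hε
    by_contra hcon
    push_neg at hcon
    have hK0 : (0:ℝ) < K := lt_of_lt_of_le one_pos hK1
    choose X hX using fun n : ℕ => hcon (Real.exp n) (Real.exp_pos n)
    -- hX n : exp n * exp (ε * ‖X n‖) < v (X n)
    have hlogX : ∀ n : ℕ, (n : ℝ) + ε * ‖X n‖ < Real.log (v (X n)) := by
      intro n
      rw [Real.lt_log_iff_exp_lt (hpos _), Real.exp_add]
      exact hX n
    set r : ℕ → ℝ := fun n => ‖X n‖ with hr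
    have hr0 : ∀ n, 0 ≤ r n := fun n => norm_nonneg _
    have hrlb : ∀ n : ℕ, (n : ℝ) / K - 1 ≤ r n := by
      intro n
      have h1 : (n : ℝ) < K * (r n + 1) := by
        have := lt_of_lt_of_le (hlogX n) (hKb (X n))
        nlinarith [mul_nonneg hε.le (hr0 n)]
      rw [div_sub' (ne_of_gt hK0), div_le_iff₀ hK0]
      nlinarith
    have hrtop : Tendsto r atTop atTop := by
      apply tendsto_atTop_mono hrlb
      apply Tendsto.atTop_add _ tendsto_const_nhds
      exact Tendsto.atTop_div_const hK0 tendsto_natCast_atTop_atTop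
    set u : ℕ → EuclideanSpace ℝ (Fin d) := fun n => (r n)⁻¹ • X n with hu
    have humem : ∀ n, u n ∈ Metric.closedBall (0 : EuclideanSpace ℝ (Fin d)) 1 := by
      intro n
      rw [Metric.mem_closedBall, dist_zero_right, hu]
      rw [norm_smul, norm_inv, Real.norm_eq_abs, abs_of_nonneg (hr0 n)]
      rcases eq_or_lt_of_le (hr0 n) with h | h
      · rw [← h]; simp
      · rw [inv_mul_le_iff₀ h, mul_one]
    obtain ⟨w, hw, φ, hφmono, hφt⟩ :=
      (isCompact_closedBall (0 : EuclideanSpace ℝ (Fin d)) 1).tendsto_subseq humem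
    have hwnorm : ‖w‖ ≤ 1 := by
      rw [Metric.mem_closedBall, dist_zero_right] at hw; exact hw
    -- GRS at w, log form
    have hGRSlog : Tendsto (fun ℓ : ℕ => (ℓ : ℝ)⁻¹ * Real.log (v ((ℓ : ℝ) • w))) atTop (nhds 0) := by
      have h1 := ((Real.continuousAt_log one_ne_zero).tendsto).comp (hGRS w)
      rw [Real.log_one] at h1
      apply h1.congr
      intro ℓ
      simp only [Function.comp_apply]
      rw [Real.log_rpow (hpos _)]
    have hev : ∀ᶠ ℓ : ℕ in atTop, (ℓ : ℝ)⁻¹ * Real.log (v ((ℓ : ℝ) • w)) < ε / 2 := by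
      have := hGRSlog.eventually (eventually_lt_nhds (by positivity : (0:ℝ) < ε / 2))
      exact this
    obtain ⟨L, hL⟩ := eventually_atTop.1 hev
    -- find a good index m
    have hδ : ∀ᶠ m : ℕ in atTop, dist (u (φ m)) w < ε / (4 * K) := by
      have := (tendsto_iff_dist_tendsto_zero.1 hφt)
      have h2 := this.eventually (eventually_lt_nhds (by positivity : (0:ℝ) < ε / (4 * K)))
      simpa using h2
    have hrφ : Tendsto (fun m => r (φ m)) atTop atTop := hrtop.comp hφmono.tendsto_atTop
    have hbig : ∀ᶠ m : ℕ in atTop, max ((8 * K + 2 * ε) / ε) (max 1 (L : ℝ)) ≤ r (φ m) :=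
      hrφ.eventually_ge_atTop _
    obtain ⟨m, hm1, hm2⟩ := (hδ.and hbig).exists
    set n := φ m with hn
    have hrbig := hm2
    have hr1 : (1:ℝ) ≤ r n := le_trans (le_trans (le_max_left _ _) (le_max_right _ _)) hrbig
    have hrpos : (0:ℝ) < r n := lt_of_lt_of_le one_pos hr1
    have hrL : (L : ℝ) ≤ r n := le_trans (le_trans (le_max_right _ _) (le_max_right _ _)) hrbig
    have hrE : (8 * K + 2 * ε) / ε ≤ r n := le_trans (le_max_left _ _) hrbig
    set ℓ : ℕ := ⌈r n⌉₊ with hℓ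
    have hrℓ : r n ≤ (ℓ : ℝ) := Nat.le_ceil _
    have hℓr : (ℓ : ℝ) ≤ r n + 1 := le_of_lt (Nat.ceil_lt_add_one (hr0 n))
    have hℓpos : (0:ℝ) < (ℓ : ℝ) := lt_of_lt_of_le hrpos hrℓ
    have hℓL : L ≤ ℓ := by
      have : (L : ℝ) ≤ (ℓ : ℝ) := le_trans hrL hrℓ
      exact_mod_cast this
    have hXn : X n = (r n) • u n := by
      rw [hu, smul_smul, mul_inv_cancel₀ (ne_of_gt hrpos), one_smul]
    set δ := ‖u n - w‖ with hδdef
    have hδsmall : δ < ε / (4 * K) := by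
      rw [hδdef, ← dist_eq_norm]; exact hm1
    have hδ0 : 0 ≤ δ := norm_nonneg _
    have hrX : ∀ k, r k = ‖X k‖ := fun k => rfl
    clear hr hu hℓ hn hrbig hm1 hm2 humem hφt hδ hev hGRSlog hrφ hbig hrtop hrlb
    clear_value δ ℓ n u r
    -- the estimate
    have step1 : Real.log (v (X n)) ≤ Real.log (v ((ℓ : ℝ) • w)) + Real.log (v (X n - (ℓ : ℝ) • w)) := by
      have h1 : v (X n) ≤ v ((ℓ : ℝ) • w) * v (X n - (ℓ : ℝ) • w) := by
        have := hsub ((ℓ : ℝ) • w) (X n - (ℓ : ℝ) • w)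
        rwa [add_sub_cancel] at this
      calc Real.log (v (X n)) ≤ Real.log (v ((ℓ : ℝ) • w) * v (X n - (ℓ : ℝ) • w)) :=
            Real.log_le_log (hpos _) h1
      _ = _ := Real.log_mul (ne_of_gt (hpos _)) (ne_of_gt (hpos _))
    have step2 : ‖X n - (ℓ : ℝ) • w‖ ≤ r n * δ + 1 := by
      have h1 : X n - (ℓ : ℝ) • w = (r n) • (u n - w) + ((r n : ℝ) - (ℓ : ℝ)) • w := by
        rw [smul_sub, sub_smul, hXn]; abel
      rw [h1]
      calc ‖(r n) • (u n - w) + ((r n : ℝ) - (ℓ : ℝ)) • w‖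
          ≤ ‖(r n) • (u n - w)‖ + ‖((r n : ℝ) - (ℓ : ℝ)) • w‖ := norm_add_le _ _
      _ ≤ r n * δ + 1 := by
          rw [norm_smul, norm_smul, Real.norm_eq_abs, Real.norm_eq_abs,
            abs_of_nonneg (hr0 n)]
          have h2 : |r n - (ℓ : ℝ)| ≤ 1 := by
            rw [abs_le]; constructor <;> linarith
          have h3 : |r n - (ℓ : ℝ)| * ‖w‖ ≤ 1 := by
            calc |r n - (ℓ : ℝ)| * ‖w‖ ≤ 1 * 1 :=
              mul_le_mul h2 hwnorm (norm_nonneg _) zero_le_one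
            _ = 1 := by ring
          rw [← hδdef]
          linarith
    have step3 : Real.log (v (X n - (ℓ : ℝ) • w)) ≤ K * (r n * δ + 2) := by
      calc Real.log (v (X n - (ℓ : ℝ) • w)) ≤ K * (‖X n - (ℓ : ℝ) • w‖ + 1) := hKb _
      _ ≤ K * (r n * δ + 2) := by nlinarith
    have step4 : ε * r n ≤ Real.log (v (X n)) := by
      rw [hrX n]
      have := hlogX n
      have hn0 : (0:ℝ) ≤ (n:ℝ) := Nat.cast_nonneg n
      linarith
    have step5 : ε / 2 * (ℓ : ℝ) ≤ Real.log (v ((ℓ : ℝ) • w)) := by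
      have hKδ : K * δ ≤ ε / 4 := by
        rw [lt_div_iff₀ (by positivity : (0:ℝ) < 4 * K)] at hδsmall
        nlinarith
      have hprod : K * (r n * δ) ≤ ε / 4 * r n := by nlinarith [hr0 n]
      have h5a : ε * r n - K * (r n * δ) - 2 * K ≤ Real.log (v ((ℓ : ℝ) • w)) := by
        linarith [step1, step3, step4]
      have h5b : ε / 2 * (ℓ : ℝ) ≤ ε / 2 * (r n + 1) :=
        mul_le_mul_of_nonneg_left hℓr (by positivity)
      have hrE' : 8 * K + 2 * ε ≤ ε * r n := by
        rw [div_le_iff₀ hε] at hrE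
        linarith
      linarith [h5a, hprod, hrE', h5b]
    have final : ε / 2 ≤ (ℓ : ℝ)⁻¹ * Real.log (v ((ℓ : ℝ) • w)) := by
      rw [le_inv_mul_iff₀ hℓpos]
      linarith [step5]
    exact absurd (hL ℓ hℓL) (not_lt.2 final)
  · intro hB x
    set b : ℕ → ℝ := fun ℓ => (ℓ : ℝ)⁻¹ * Real.log (v ((ℓ : ℝ) • x)) with hb
    have hbnn : ∀ ℓ, 0 ≤ b ℓ := by
      intro ℓ
      apply mul_nonneg (by positivity)
      exact Real.log_nonneg (hone _)
    have hblim : Tendsto b atTop (nhds 0) := by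
      rw [Metric.tendsto_atTop]
      intro ε hε
      have hd : (0:ℝ) < ε / (2 * (‖x‖ + 1)) := by positivity
      obtain ⟨C, hC, hCb⟩ := hB _ hd
      obtain ⟨N, hN⟩ := exists_nat_gt (max 1 (2 * |Real.log C| / ε))
      refine ⟨N, fun n hn => ?_⟩
      have hnN : (N:ℝ) ≤ (n:ℝ) := by exact_mod_cast hn
      have hn1 : (1:ℝ) ≤ (n:ℝ) := le_trans (le_trans (le_max_left _ _) hN.le) hnN
      have hn0 : (0:ℝ) < (n:ℝ) := lt_of_lt_of_le one_pos hn1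
      have hlog : Real.log (v ((n:ℝ) • x)) ≤ Real.log C + ε / (2 * (‖x‖ + 1)) * ((n:ℝ) * ‖x‖) := by
        have h1 := hCb ((n:ℝ) • x)
        rw [norm_smul, Real.norm_eq_abs, abs_of_pos hn0] at h1
        calc Real.log (v ((n:ℝ) • x)) ≤ Real.log (C * Real.exp (ε / (2 * (‖x‖ + 1)) * ((n:ℝ) * ‖x‖))) :=
              Real.log_le_log (hpos _) h1
        _ = Real.log C + ε / (2 * (‖x‖ + 1)) * ((n:ℝ) * ‖x‖) := by
              rw [Real.log_mul (ne_of_gt hC) (Real.exp_ne_zero _), Real.log_exp]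
      have key : b n < ε := by
        have h2 : ε / (2 * (‖x‖ + 1)) * ‖x‖ ≤ ε / 2 := by
          rw [div_mul_eq_mul_div, div_le_div_iff₀ (by positivity) two_pos]
          nlinarith [norm_nonneg x]
        have h3 : (n:ℝ)⁻¹ * Real.log C < ε / 2 := by
          have h4 : (n:ℝ)⁻¹ * Real.log C ≤ (n:ℝ)⁻¹ * |Real.log C| := by
            apply mul_le_mul_of_nonneg_left (le_abs_self _) (by positivity)
          have h5 : 2 * |Real.log C| / ε < (n:ℝ) := lt_of_lt_of_le (lt_of_le_of_lt (le_max_right _ _) hN) hnN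
          rw [div_lt_iff₀ hε] at h5
          calc (n:ℝ)⁻¹ * Real.log C ≤ (n:ℝ)⁻¹ * |Real.log C| := h4
          _ < ε / 2 := by
              rw [inv_mul_lt_iff₀ hn0]
              nlinarith
        calc b n ≤ (n:ℝ)⁻¹ * (Real.log C + ε / (2 * (‖x‖ + 1)) * ((n:ℝ) * ‖x‖)) := by
              apply mul_le_mul_of_nonneg_left hlog (by positivity)
        _ = (n:ℝ)⁻¹ * Real.log C + ε / (2 * (‖x‖ + 1)) * ‖x‖ * ((n:ℝ)⁻¹ * (n:ℝ)) := by ring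
        _ = (n:ℝ)⁻¹ * Real.log C + ε / (2 * (‖x‖ + 1)) * ‖x‖ := by
              rw [inv_mul_cancel₀ (ne_of_gt hn0), mul_one]
        _ < ε := by linarith
      rw [Real.dist_eq, sub_zero, abs_of_nonneg (hbnn n)]
      exact key
    have hexp : Tendsto (fun ℓ : ℕ => Real.exp (b ℓ)) atTop (nhds 1) := by
      have := (Real.continuous_exp.tendsto 0).comp hblim
      rw [Real.exp_zero] at this
      exact this
    apply hexp.congr'
    filter_upwards [eventually_ge_atTop 1] with ℓ hℓ
    have hℓ0 : (0:ℝ) < (ℓ:ℝ) := by exact_mod_cast Nat.lt_of_lt_of_le Nat.zero_lt_one hℓ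
    rw [Real.rpow_def_of_pos (hpos _), hb]
    ring_nf
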